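/- In the US legislative game, let Φ be either the Banzhaf power index (weighting vector λ_k = 1/2^536 for all k) or the Shapley–Shubik power index (weighting vector λ_k = 1/(537 · C(536, k−1))). Then for any senator S and any representative R: Φ(P) > Φ(S) > Φ(V) > Φ(R). -/

import Mathlib

/-- The players of the US legislative game: the president, the vice president,
100 senators, and 435 representatives. -/
inductive USPlayer where
  | pres : USPlayer
  | vp : USPlayer
  | sen : Fin 100 → USPlayer
  | rep : Fin 435 → USPlayer
  deriving DecidableEq

/-- Whether a player is a senator. -/
def USPlayer.isSen : USPlayer → Bool
  | .sen _ => true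
  | _ => false

/-- Whether a player is a representative. -/
def USPlayer.isRep : USPlayer → Bool
  | .rep _ => true
  | _ => false

/-- The number of senators in a coalition. -/
def numSen (S : Finset USPlayer) : ℕ := (S.filter (fun p => p.isSen)).card

/-- The number of representatives in a coalition. -/
def numRep (S : Finset USPlayer) : ℕ := (S.filter (fun p => p.isRep)).card

/-- A coalition is winning in the US legislative game iff either the president is in it
together with at least 218 representatives and either at least 51 senators or the vice
president and at least 50 senators; or it contains at least 67 senators and at least
290 representatives (veto override). -/
def usWinning (S : Finset USPlayer) : Prop :=
  (USPlayer.pres ∈ S ∧ 218 ≤ numRep S ∧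
    (51 ≤ numSen S ∨ (USPlayer.vp ∈ S ∧ 50 ≤ numSen S))) ∨
  (67 ≤ numSen S ∧ 290 ≤ numRep S)

/-- The number of coalitions of size `k` in which player `i` is critical in the US
legislative game. -/
noncomputable def usCrit (i : USPlayer) (k : ℕ) : ℕ :=
  Set.ncard {S : Finset USPlayer |
    S.card = k ∧ i ∈ S ∧ usWinning S ∧ ¬ usWinning (S.erase i)}
/-- The power of player `i` under the power index with weighting vector `lam` on the
537-player US legislative game. -/
noncomputable def usPower (lam : ℕ → ℝ) (i : USPlayer) : ℝ :=
  ∑ k ∈ Finset.Icc 1 537, lam k * (usCrit i k : ℝ)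

open Finset

instance : DecidablePred usWinning := fun S => by unfold usWinning; infer_instance

instance : Fintype USPlayer := by
  classical
  exact Fintype.ofSurjective (fun x : (Unit ⊕ Unit) ⊕ (Fin 100 ⊕ Fin 435) =>
    match x with
    | .inl (.inl _) => USPlayer.pres
    | .inl (.inr _) => USPlayer.vp
    | .inr (.inl j) => USPlayer.sen j
    | .inr (.inr j) => USPlayer.rep j)
    (fun p => by cases p with
      | pres => exact ⟨.inl (.inl ()), rfl⟩
      | vp => exact ⟨.inl (.inr ()), rfl⟩
      | sen j => exact ⟨.inr (.inl j), rfl⟩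
      | rep j => exact ⟨.inr (.inr j), rfl⟩)

lemma sen_inj : Function.Injective USPlayer.sen := fun a b h => by injection h
lemma rep_inj : Function.Injective USPlayer.rep := fun a b h => by injection h

def senSet (S : Finset USPlayer) : Finset (Fin 100) := univ.filter (fun j => USPlayer.sen j ∈ S)
def repSet (S : Finset USPlayer) : Finset (Fin 435) := univ.filter (fun j => USPlayer.rep j ∈ S)

lemma numSen_eq (S : Finset USPlayer) : numSen S = (senSet S).card := by
  rw [numSen]
  have : S.filter (fun p => p.isSen) = (senSet S).image USPlayer.sen := by
    ext x
    rw [mem_filter]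
    cases x <;> simp [senSet, USPlayer.isSen]
  rw [this, card_image_of_injective _ sen_inj]

lemma numRep_eq (S : Finset USPlayer) : numRep S = (repSet S).card := by
  rw [numRep]
  have : S.filter (fun p => p.isRep) = (repSet S).image USPlayer.rep := by
    ext x
    rw [mem_filter]
    cases x <;> simp [repSet, USPlayer.isRep]
  rw [this, card_image_of_injective _ rep_inj]

def mkS (p v : Bool) (A : Finset (Fin 100)) (B : Finset (Fin 435)) : Finset USPlayer :=
  ((if p then {USPlayer.pres} else ∅) ∪ (if v then {USPlayer.vp} else ∅)) ∪
    (A.image USPlayer.sen ∪ B.image USPlayer.rep)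

lemma mem_mkS_pres (p v A B) : USPlayer.pres ∈ mkS p v A B ↔ p = true := by
  cases p <;> cases v <;> simp [mkS]
lemma mem_mkS_vp (p v A B) : USPlayer.vp ∈ mkS p v A B ↔ v = true := by
  cases p <;> cases v <;> simp [mkS]
lemma mem_mkS_sen (p v A B) (j : Fin 100) : USPlayer.sen j ∈ mkS p v A B ↔ j ∈ A := by
  cases p <;> cases v <;> simp [mkS, sen_inj.eq_iff]
lemma mem_mkS_rep (p v A B) (j : Fin 435) : USPlayer.rep j ∈ mkS p v A B ↔ j ∈ B := by
  cases p <;> cases v <;> simp [mkS, rep_inj.eq_iff]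

lemma senSet_mkS (p v A B) : senSet (mkS p v A B) = A := by
  ext j; simp [senSet, mem_mkS_sen]
lemma repSet_mkS (p v A B) : repSet (mkS p v A B) = B := by
  ext j; simp [repSet, mem_mkS_rep]

lemma mkS_eta (S : Finset USPlayer) (p v : Bool)
    (hp : USPlayer.pres ∈ S ↔ p = true) (hv : USPlayer.vp ∈ S ↔ v = true) :
    mkS p v (senSet S) (repSet S) = S := by
  ext x
  cases x with
  | pres => rw [mem_mkS_pres]; exact hp.symm
  | vp => rw [mem_mkS_vp]; exact hv.symm
  | sen j => rw [mem_mkS_sen]; simp [senSet]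
  | rep j => rw [mem_mkS_rep]; simp [repSet]

lemma card_mkS (p v : Bool) (A : Finset (Fin 100)) (B : Finset (Fin 435)) :
    (mkS p v A B).card = (if p then 1 else 0) + (if v then 1 else 0) + A.card + B.card := by
  rw [mkS]
  rw [card_union_of_disjoint, card_union_of_disjoint, card_union_of_disjoint,
    card_image_of_injective _ sen_inj, card_image_of_injective _ rep_inj]
  · cases p <;> cases v <;> simp <;> ring
  · rw [disjoint_left]; intro x hx
    rcases mem_image.1 hx with ⟨j, _, rfl⟩
    intro hx2
    rcases mem_image.1 hx2 with ⟨j2, _, h⟩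
    exact absurd h (by simp)
  · cases p <;> cases v <;> simp [disjoint_left]
  · rw [disjoint_left]; intro x hx
    have : x = USPlayer.pres ∨ x = USPlayer.vp := by
      cases p <;> cases v <;> simp_all [mem_union] <;> tauto
    intro hx2
    rcases this with rfl | rfl <;> simp_all [mem_union]

lemma card_decomp (S : Finset USPlayer) :
    S.card = (if USPlayer.pres ∈ S then 1 else 0) + (if USPlayer.vp ∈ S then 1 else 0)
      + (senSet S).card + (repSet S).card := by
  conv_lhs => rw [← mkS_eta S (decide (USPlayer.pres ∈ S)) (decide (USPlayer.vp ∈ S))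
    (by simp) (by simp)]
  rw [card_mkS]
  by_cases hp : USPlayer.pres ∈ S <;> by_cases hv : USPlayer.vp ∈ S <;> simp [hp, hv]

lemma count_profile (p v : Bool) (𝒜 : Finset (Finset (Fin 100))) (ℬ : Finset (Finset (Fin 435))) :
    (univ.filter (fun S : Finset USPlayer =>
      (USPlayer.pres ∈ S ↔ p = true) ∧ (USPlayer.vp ∈ S ↔ v = true) ∧
      senSet S ∈ 𝒜 ∧ repSet S ∈ ℬ)).card = 𝒜.card * ℬ.card := by
  rw [← card_product]
  apply card_bij' (i := fun S _ => (senSet S, repSet S))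
    (j := fun x _ => mkS p v x.1 x.2)
  · intro S hS
    simp only [mem_filter] at hS
    simp [mem_product, hS.2.2.1, hS.2.2.2]
  · intro x hx
    simp only [mem_product] at hx
    simp [mem_filter, mem_mkS_pres, mem_mkS_vp, senSet_mkS, repSet_mkS, hx.1, hx.2]
  · intro S hS
    simp only [mem_filter] at hS
    exact mkS_eta S p v hS.2.1 hS.2.2.1
  · intro x hx
    simp [senSet_mkS, repSet_mkS]
lemma card_subsets_mem (n a : ℕ) (x : Fin (n+1)) :
    (((univ : Finset (Fin (n+1))).powersetCard (a+1)).filter (fun A => x ∈ A)).card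
      = n.choose a := by
  have h2 : ((univ : Finset (Fin (n+1))).erase x).card = n := by
    rw [card_erase_of_mem (mem_univ x), card_univ, Fintype.card_fin]; omega
  have key : (((univ : Finset (Fin (n+1))).powersetCard (a+1)).filter (fun A => x ∈ A)).card
      = (powersetCard a ((univ : Finset (Fin (n+1))).erase x)).card := by
    refine card_nbij' (fun A => A.erase x) (fun B => insert x B) ?_ ?_ ?_ ?_
    · intro A hA
      simp only [mem_coe, mem_filter, mem_powersetCard] at hA
      simp only [mem_coe, mem_powersetCard]
      constructor
      · intro y hy
        rw [mem_erase] at hy ⊢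
        exact ⟨hy.1, mem_univ y⟩
      · rw [card_erase_of_mem hA.2, hA.1.2]; omega
    · intro B hB
      simp only [mem_coe, mem_powersetCard] at hB
      have hxB : x ∉ B := fun h => by
        have := hB.1 h; simp at this
      simp only [mem_coe, mem_filter, mem_powersetCard]
      refine ⟨⟨subset_univ _, ?_⟩, mem_insert_self _ _⟩
      rw [card_insert_of_notMem hxB, hB.2]
    · intro A hA
      simp only [mem_coe, mem_filter] at hA
      exact insert_erase hA.2
    · intro B hB
      simp only [mem_coe, mem_powersetCard] at hB
      exact erase_insert (fun h => by have := hB.1 h; simp at this)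
  rw [key, card_powersetCard, h2]

lemma card_powersetCard_univ (n a : ℕ) :
    ((univ : Finset (Fin n)).powersetCard a).card = n.choose a := by
  rw [card_powersetCard, card_univ, Fintype.card_fin]
lemma numSen_erase_vp (S) : numSen (S.erase USPlayer.vp) = numSen S := by
  rw [numSen, numSen, filter_erase, erase_eq_of_notMem]; rw [mem_filter]; simp [USPlayer.isSen]
lemma numSen_erase_pres (S) : numSen (S.erase USPlayer.pres) = numSen S := by
  rw [numSen, numSen, filter_erase, erase_eq_of_notMem]; rw [mem_filter]; simp [USPlayer.isSen]
lemma numSen_erase_rep (j S) : numSen (S.erase (USPlayer.rep j)) = numSen S := by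
  rw [numSen, numSen, filter_erase, erase_eq_of_notMem]; rw [mem_filter]; simp [USPlayer.isSen]
lemma numRep_erase_vp (S) : numRep (S.erase USPlayer.vp) = numRep S := by
  rw [numRep, numRep, filter_erase, erase_eq_of_notMem]; rw [mem_filter]; simp [USPlayer.isRep]
lemma numRep_erase_pres (S) : numRep (S.erase USPlayer.pres) = numRep S := by
  rw [numRep, numRep, filter_erase, erase_eq_of_notMem]; rw [mem_filter]; simp [USPlayer.isRep]
lemma numRep_erase_sen (j S) : numRep (S.erase (USPlayer.sen j)) = numRep S := by
  rw [numRep, numRep, filter_erase, erase_eq_of_notMem]; rw [mem_filter]; simp [USPlayer.isRep]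
lemma numSen_erase_sen (j S) (h : USPlayer.sen j ∈ S) :
    numSen (S.erase (USPlayer.sen j)) = numSen S - 1 := by
  rw [numSen, numSen, filter_erase, card_erase_of_mem]
  exact mem_filter.2 ⟨h, rfl⟩
lemma numRep_erase_rep (j S) (h : USPlayer.rep j ∈ S) :
    numRep (S.erase (USPlayer.rep j)) = numRep S - 1 := by
  rw [numRep, numRep, filter_erase, card_erase_of_mem]
  exact mem_filter.2 ⟨h, rfl⟩
lemma numSen_pos (j S) (h : USPlayer.sen j ∈ S) : 1 ≤ numSen S :=
  card_pos.2 ⟨USPlayer.sen j, mem_filter.2 ⟨h, rfl⟩⟩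
lemma numRep_pos (j S) (h : USPlayer.rep j ∈ S) : 1 ≤ numRep S :=
  card_pos.2 ⟨USPlayer.rep j, mem_filter.2 ⟨h, rfl⟩⟩

lemma crit_vp_iff (S) : (USPlayer.vp ∈ S ∧ usWinning S ∧ ¬ usWinning (S.erase USPlayer.vp)) ↔
    (USPlayer.pres ∈ S ∧ USPlayer.vp ∈ S ∧ numSen S = 50 ∧ 218 ≤ numRep S) := by
  unfold usWinning
  rw [numSen_erase_vp, numRep_erase_vp]
  simp only [mem_erase]
  constructor
  · rintro ⟨hv, hwin, hlose⟩
    rcases hwin with ⟨hp, hr, hs⟩ | ⟨h67, h290⟩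
    · refine ⟨hp, hv, ?_, hr⟩
      have h51 : ¬ (51 ≤ numSen S) := fun h => hlose (Or.inl ⟨⟨by simp, hp⟩, hr, Or.inl h⟩)
      rcases hs with h | ⟨_, h⟩ <;> omega
    · exact absurd (Or.inr ⟨h67, h290⟩) hlose
  · rintro ⟨hp, hv, h50, hr⟩
    refine ⟨hv, Or.inl ⟨hp, hr, Or.inr ⟨hv, by omega⟩⟩, ?_⟩
    rintro (⟨_, _, h | ⟨⟨h, _⟩, _⟩⟩ | ⟨h, _⟩) <;> simp_all <;> omega

lemma crit_sen_iff (s : Fin 100) (S) :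
    (USPlayer.sen s ∈ S ∧ usWinning S ∧ ¬ usWinning (S.erase (USPlayer.sen s))) ↔
    ((USPlayer.pres ∈ S ∧ ¬ USPlayer.vp ∈ S ∧ USPlayer.sen s ∈ S ∧ numSen S = 51 ∧ 218 ≤ numRep S) ∨
     (USPlayer.pres ∈ S ∧ USPlayer.vp ∈ S ∧ USPlayer.sen s ∈ S ∧ numSen S = 50 ∧ 218 ≤ numRep S) ∨
     (¬ USPlayer.pres ∈ S ∧ USPlayer.sen s ∈ S ∧ numSen S = 67 ∧ 290 ≤ numRep S)) := by
  constructor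
  · rintro ⟨hs, hwin, hlose⟩
    have e1 : numSen (S.erase (USPlayer.sen s)) = numSen S - 1 := numSen_erase_sen s S hs
    have e2 : numRep (S.erase (USPlayer.sen s)) = numRep S := numRep_erase_sen s S
    have h1 : 1 ≤ numSen S := numSen_pos s S hs
    rcases hwin with ⟨hp, hr, hsen⟩ | ⟨h67, h290⟩
    · by_cases hv : USPlayer.vp ∈ S
      · right; left
        refine ⟨hp, hv, hs, ?_, hr⟩
        have h50 : ¬ (50 ≤ numSen S - 1) := fun h => hlose (Or.inl
          ⟨mem_erase.2 ⟨by simp, hp⟩, by omega, Or.inr ⟨mem_erase.2 ⟨by simp, hv⟩, by omega⟩⟩)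
        rcases hsen with h | ⟨_, h⟩ <;> omega
      · left
        refine ⟨hp, hv, hs, ?_, hr⟩
        have h51 : ¬ (51 ≤ numSen S - 1) := fun h => hlose (Or.inl
          ⟨mem_erase.2 ⟨by simp, hp⟩, by omega, Or.inl (by omega)⟩)
        rcases hsen with h | ⟨hv', _⟩
        · omega
        · exact absurd hv' hv
    · have hp : USPlayer.pres ∉ S := fun hp => hlose (Or.inl
        ⟨mem_erase.2 ⟨by simp, hp⟩, by omega, Or.inl (by omega)⟩)
      have h67e : ¬ (67 ≤ numSen S - 1) := fun h => hlose (Or.inr ⟨by omega, by omega⟩)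
      exact Or.inr (Or.inr ⟨hp, hs, by omega, h290⟩)
  · intro h
    have hs : USPlayer.sen s ∈ S := by rcases h with ⟨_,_,hs,_⟩|⟨_,_,hs,_⟩|⟨_,hs,_⟩ <;> exact hs
    have e1 : numSen (S.erase (USPlayer.sen s)) = numSen S - 1 := numSen_erase_sen s S hs
    have e2 : numRep (S.erase (USPlayer.sen s)) = numRep S := numRep_erase_sen s S
    have hvp : USPlayer.vp ∈ S.erase (USPlayer.sen s) ↔ USPlayer.vp ∈ S := by simp
    have hpr : USPlayer.pres ∈ S.erase (USPlayer.sen s) ↔ USPlayer.pres ∈ S := by simp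
    rcases h with ⟨hp, hv, _, h51, hr⟩ | ⟨hp, hv, _, h50, hr⟩ | ⟨hp, _, h67, hr⟩
    · refine ⟨hs, Or.inl ⟨hp, hr, Or.inl (by omega)⟩, ?_⟩
      rintro (⟨_, _, hc | ⟨hc, hc'⟩⟩ | ⟨hc, _⟩) <;> rw [hvp] at * <;> first | omega | exact hv (by assumption)
    · refine ⟨hs, Or.inl ⟨hp, hr, Or.inr ⟨hv, by omega⟩⟩, ?_⟩
      rintro (⟨_, _, hc | ⟨hc, hc'⟩⟩ | ⟨hc, _⟩) <;> omega
    · refine ⟨hs, Or.inr ⟨by omega, hr⟩, ?_⟩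
      rintro (⟨hc, _, _⟩ | ⟨hc, _⟩)
      · exact hp (hpr.1 hc)
      · omega

lemma crit_rep_iff (r : Fin 435) (S) :
    (USPlayer.rep r ∈ S ∧ usWinning S ∧ ¬ usWinning (S.erase (USPlayer.rep r))) ↔
    ((USPlayer.pres ∈ S ∧ USPlayer.rep r ∈ S ∧ numRep S = 218 ∧
        (51 ≤ numSen S ∨ (USPlayer.vp ∈ S ∧ 50 ≤ numSen S))) ∨
     (¬ USPlayer.pres ∈ S ∧ USPlayer.rep r ∈ S ∧ numRep S = 290 ∧ 67 ≤ numSen S)) := by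
  constructor
  · rintro ⟨hs, hwin, hlose⟩
    have e1 : numRep (S.erase (USPlayer.rep r)) = numRep S - 1 := numRep_erase_rep r S hs
    have e2 : numSen (S.erase (USPlayer.rep r)) = numSen S := numSen_erase_rep r S
    have h1 : 1 ≤ numRep S := numRep_pos r S hs
    have hvp : USPlayer.vp ∈ S.erase (USPlayer.rep r) ↔ USPlayer.vp ∈ S := by simp
    rcases hwin with ⟨hp, hr, hsen⟩ | ⟨h67, h290⟩
    · left
      refine ⟨hp, hs, ?_, hsen⟩
      have h218 : ¬ (218 ≤ numRep S - 1) := fun h => hlose (Or.inl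
        ⟨mem_erase.2 ⟨by simp, hp⟩, by omega, by
          rcases hsen with h' | ⟨hv', h'⟩
          · exact Or.inl (by omega)
          · exact Or.inr ⟨hvp.2 hv', by omega⟩⟩)
      omega
    · right
      have hp : USPlayer.pres ∉ S := fun hp => hlose (Or.inl
        ⟨mem_erase.2 ⟨by simp, hp⟩, by omega, Or.inl (by omega)⟩)
      have h290e : ¬ (290 ≤ numRep S - 1) := fun h => hlose (Or.inr ⟨by omega, by omega⟩)
      exact ⟨hp, hs, by omega, h67⟩
  · intro h
    have hs : USPlayer.rep r ∈ S := by rcases h with ⟨_,hs,_⟩|⟨_,hs,_⟩ <;> exact hs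
    have e1 : numRep (S.erase (USPlayer.rep r)) = numRep S - 1 := numRep_erase_rep r S hs
    have e2 : numSen (S.erase (USPlayer.rep r)) = numSen S := numSen_erase_rep r S
    have hpr : USPlayer.pres ∈ S.erase (USPlayer.rep r) ↔ USPlayer.pres ∈ S := by simp
    rcases h with ⟨hp, _, h218, hsen⟩ | ⟨hp, _, h290, h67⟩
    · refine ⟨hs, Or.inl ⟨hp, by omega, hsen⟩, ?_⟩
      rintro (⟨_, hc, _⟩ | ⟨_, hc⟩) <;> omega
    · refine ⟨hs, Or.inr ⟨h67, by omega⟩, ?_⟩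
      rintro (⟨hc, _, _⟩ | ⟨_, hc⟩)
      · exact hp (hpr.1 hc)
      · omega

lemma crit_pres_of (S) (hp : USPlayer.pres ∈ S) (hr : 218 ≤ numRep S)
    (hsen : 51 ≤ numSen S ∨ (USPlayer.vp ∈ S ∧ 50 ≤ numSen S)) (h66 : numSen S ≤ 66) :
    (USPlayer.pres ∈ S ∧ usWinning S ∧ ¬ usWinning (S.erase USPlayer.pres)) := by
  refine ⟨hp, Or.inl ⟨hp, hr, hsen⟩, ?_⟩
  have e1 : numSen (S.erase USPlayer.pres) = numSen S := numSen_erase_pres S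
  have e2 : numRep (S.erase USPlayer.pres) = numRep S := numRep_erase_pres S
  rintro (⟨hc, _⟩ | ⟨hc, _⟩)
  · exact (notMem_erase _ _) hc
  · omega

lemma usCrit_mono {i j : USPlayer} (hne : j ≠ i)
    (h : ∀ T, i ∉ T → j ∉ T → usWinning (insert j T) → usWinning (insert i T)) (k : ℕ) :
    usCrit j k ≤ usCrit i k := by
  classical
  set D : Set (Finset USPlayer) :=
    {S | S.card = k ∧ j ∈ S ∧ usWinning S ∧ ¬ usWinning (S.erase j)} with hD
  set D' : Set (Finset USPlayer) :=
    {S | S.card = k ∧ i ∈ S ∧ usWinning S ∧ ¬ usWinning (S.erase i)} with hD'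
  set f : Finset USPlayer → Finset USPlayer :=
    fun S => if i ∈ S then S else insert i (S.erase j) with hf
  have hmaps : ∀ S ∈ D, f S ∈ D' := by
    rintro S ⟨hcard, hj, hwin, hlose⟩
    by_cases hi : i ∈ S
    · have hfS : f S = S := if_pos hi
      rw [hfS]
      refine ⟨hcard, hi, hwin, ?_⟩
      intro hwe
      apply hlose
      have h1 : insert j ((S.erase i).erase j) = S.erase i :=
        insert_erase (mem_erase.2 ⟨hne, hj⟩)
      have h2 : i ∉ (S.erase i).erase j := fun hc => (notMem_erase i S) (mem_of_mem_erase hc)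
      have h3 : j ∉ (S.erase i).erase j := notMem_erase _ _
      have := h _ h2 h3 (by rw [h1]; exact hwe)
      have h4 : insert i ((S.erase i).erase j) = S.erase j := by
        rw [erase_right_comm]
        exact insert_erase (mem_erase.2 ⟨fun hc => hne hc.symm, hi⟩)
      rwa [h4] at this
    · have hfS : f S = insert i (S.erase j) := if_neg hi
      have hij : i ∉ S.erase j := fun hc => hi (mem_of_mem_erase hc)
      have hjj : j ∉ S.erase j := notMem_erase _ _
      rw [hfS]
      refine ⟨?_, mem_insert_self _ _, ?_, ?_⟩
      · rw [card_insert_of_notMem hij, card_erase_of_mem hj]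
        have : 1 ≤ S.card := card_pos.2 ⟨j, hj⟩
        omega
      · exact h _ hij hjj (by rw [insert_erase hj]; exact hwin)
      · rw [erase_insert hij]
        exact hlose
  have hinj : Set.InjOn f D := by
    rintro S1 ⟨_, hj1, _, _⟩ S2 ⟨_, hj2, _, _⟩ heq
    by_cases h1 : i ∈ S1 <;> by_cases h2 : i ∈ S2 <;>
      simp only [hf, if_pos, if_neg, h1, h2, if_true, if_false] at heq
    · exact heq
    · exfalso
      have : j ∈ insert i (S2.erase j) := heq ▸ hj1
      rcases mem_insert.1 this with hc | hc
      · exact hne hc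
      · exact (notMem_erase _ _) hc
    · exfalso
      have : j ∈ insert i (S1.erase j) := heq ▸ hj2
      rcases mem_insert.1 this with hc | hc
      · exact hne hc
      · exact (notMem_erase _ _) hc
    · have e1 : S1.erase j = S2.erase j := by
        have hi1 : i ∉ S1.erase j := fun hc => h1 (mem_of_mem_erase hc)
        have hi2 : i ∉ S2.erase j := fun hc => h2 (mem_of_mem_erase hc)
        rw [← erase_insert hi1, ← erase_insert hi2, heq]
      rw [← insert_erase hj1, ← insert_erase hj2, e1]
  calc usCrit j k = D.ncard := rfl
    _ = (f '' D).ncard := (Set.ncard_image_of_injOn hinj).symm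
    _ ≤ D'.ncard := Set.ncard_le_ncard (Set.image_subset_iff.2 hmaps) (Set.toFinite _)
    _ = usCrit i k := rfl

lemma numSen_insert_sen (j T) (h : USPlayer.sen j ∉ T) :
    numSen (insert (USPlayer.sen j) T) = numSen T + 1 := by
  rw [numSen, numSen, filter_insert, if_pos (by simp [USPlayer.isSen]), card_insert_of_notMem]
  simp [mem_filter, h]

lemma numSen_insert_pres (T) : numSen (insert USPlayer.pres T) = numSen T := by
  rw [numSen, numSen, filter_insert, if_neg]; simp [USPlayer.isSen]

lemma numRep_insert_sen (j T) : numRep (insert (USPlayer.sen j) T) = numRep T := by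
  rw [numRep, numRep, filter_insert, if_neg]; simp [USPlayer.isRep]

lemma numRep_insert_pres (T) : numRep (insert USPlayer.pres T) = numRep T := by
  rw [numRep, numRep, filter_insert, if_neg]; simp [USPlayer.isRep]

lemma usCrit_sen_le_pres (s : Fin 100) (k : ℕ) :
    usCrit (USPlayer.sen s) k ≤ usCrit USPlayer.pres k := by
  apply usCrit_mono (by simp)
  intro T hp hs hw
  have e1 := numSen_insert_sen s T hs
  have e2 := numRep_insert_sen s T
  rcases hw with ⟨hc, _, _⟩ | ⟨h67, h290⟩
  · rcases mem_insert.1 hc with hc | hc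
    · exact absurd hc (by simp)
    · exact absurd hc hp
  · exact Or.inl ⟨mem_insert_self _ _,
      by rw [numRep_insert_pres]; omega,
      Or.inl (by rw [numSen_insert_pres]; omega)⟩

lemma usCrit_eq_card (i : USPlayer) (k : ℕ) :
    usCrit i k = (univ.filter (fun S : Finset USPlayer =>
      S.card = k ∧ i ∈ S ∧ usWinning S ∧ ¬ usWinning (S.erase i))).card := by
  rw [usCrit]
  have h : {S : Finset USPlayer | S.card = k ∧ i ∈ S ∧ usWinning S ∧ ¬ usWinning (S.erase i)}
      = ↑(univ.filter (fun S : Finset USPlayer =>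
        S.card = k ∧ i ∈ S ∧ usWinning S ∧ ¬ usWinning (S.erase i))) := by
    ext S; simp
  rw [h, Set.ncard_coe_finset]

lemma mem_senSet (s : Fin 100) (S : Finset USPlayer) :
    s ∈ senSet S ↔ USPlayer.sen s ∈ S := by simp [senSet]
lemma mem_repSet (r : Fin 435) (S : Finset USPlayer) :
    r ∈ repSet S ↔ USPlayer.rep r ∈ S := by simp [repSet]

lemma crit_vp_eq (k : ℕ) : usCrit USPlayer.vp k =
    if 270 ≤ k then Nat.choose 100 50 * Nat.choose 435 (k - 52) else 0 := by
  rw [usCrit_eq_card]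
  split_ifs with hk
  · have hfe : (univ.filter (fun S : Finset USPlayer =>
        S.card = k ∧ USPlayer.vp ∈ S ∧ usWinning S ∧ ¬ usWinning (S.erase USPlayer.vp)))
        = (univ.filter (fun S : Finset USPlayer =>
            (USPlayer.pres ∈ S ↔ true = true) ∧ (USPlayer.vp ∈ S ↔ true = true) ∧
            senSet S ∈ univ.powersetCard 50 ∧ repSet S ∈ univ.powersetCard (k-52))) := by
      apply filter_congr
      intro S _
      rw [crit_vp_iff]
      have hd := card_decomp S
      rw [numSen_eq, numRep_eq]
      simp only [mem_powersetCard_univ, iff_true]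
      constructor
      · rintro ⟨hcard, hp, hv, h50, hr⟩
        rw [if_pos hp, if_pos hv] at hd
        exact ⟨hp, hv, h50, by omega⟩
      · rintro ⟨hp, hv, h50, hrep⟩
        rw [if_pos hp, if_pos hv] at hd
        exact ⟨by omega, hp, hv, h50, by omega⟩
    rw [hfe, count_profile true true _ _, card_powersetCard_univ, card_powersetCard_univ]
  · rw [card_eq_zero, filter_eq_empty_iff]
    intro S _
    rintro ⟨hcard, hcrit⟩
    rw [crit_vp_iff] at hcrit
    obtain ⟨hp, hv, h50, hr⟩ := hcrit
    have hd := card_decomp S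
    rw [if_pos hp, if_pos hv, ← numSen_eq, ← numRep_eq] at hd
    omega

lemma mem_ite_empty {α : Type*} (c : Prop) [Decidable c] (X : Finset α) (a : α) :
    a ∈ (if c then X else ∅) ↔ c ∧ a ∈ X := by
  split_ifs with h <;> simp [h]

lemma crit_sen_eq (s : Fin 100) (k : ℕ) : usCrit (USPlayer.sen s) k =
    (if 270 ≤ k then Nat.choose 99 50 * Nat.choose 435 (k-52)
        + Nat.choose 99 49 * Nat.choose 435 (k-52) else 0)
      + (if 357 ≤ k then Nat.choose 99 66 * Nat.choose 435 (k-67) else 0)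
      + (if 358 ≤ k then Nat.choose 99 66 * Nat.choose 435 (k-68) else 0) := by
  rw [usCrit_eq_card]
  have hfe : (univ.filter (fun S : Finset USPlayer =>
      S.card = k ∧ USPlayer.sen s ∈ S ∧ usWinning S ∧ ¬ usWinning (S.erase (USPlayer.sen s))))
      = (univ.filter (fun S : Finset USPlayer =>
        ((USPlayer.pres ∈ S ↔ true = true) ∧ (USPlayer.vp ∈ S ↔ false = true) ∧
          senSet S ∈ (univ.powersetCard 51).filter (fun A => s ∈ A) ∧
          repSet S ∈ (if 270 ≤ k then univ.powersetCard (k-52) else ∅)) ∨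
        ((USPlayer.pres ∈ S ↔ true = true) ∧ (USPlayer.vp ∈ S ↔ true = true) ∧
          senSet S ∈ (univ.powersetCard 50).filter (fun A => s ∈ A) ∧
          repSet S ∈ (if 270 ≤ k then univ.powersetCard (k-52) else ∅)) ∨
        ((USPlayer.pres ∈ S ↔ false = true) ∧ (USPlayer.vp ∈ S ↔ false = true) ∧
          senSet S ∈ (univ.powersetCard 67).filter (fun A => s ∈ A) ∧
          repSet S ∈ (if 357 ≤ k then univ.powersetCard (k-67) else ∅)) ∨
        ((USPlayer.pres ∈ S ↔ false = true) ∧ (USPlayer.vp ∈ S ↔ true = true) ∧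
          senSet S ∈ (univ.powersetCard 67).filter (fun A => s ∈ A) ∧
          repSet S ∈ (if 358 ≤ k then univ.powersetCard (k-68) else ∅)))) := by
    apply filter_congr
    intro S _
    rw [crit_sen_iff]
    have hd := card_decomp S
    rw [numSen_eq, numRep_eq]
    simp only [mem_filter, mem_powersetCard_univ, mem_senSet, mem_ite_empty, iff_true,
      Bool.false_eq_true, iff_false]
    constructor
    · rintro ⟨hcard, hD⟩
      rcases hD with ⟨hp, hv, hs, h51, hr⟩ | ⟨hp, hv, hs, h50, hr⟩ | ⟨hp, hs, h67, hr⟩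
      · rw [if_pos hp, if_neg hv] at hd
        exact Or.inl ⟨hp, hv, ⟨⟨h51, hs⟩, by omega, by omega⟩⟩
      · rw [if_pos hp, if_pos hv] at hd
        exact Or.inr (Or.inl ⟨hp, hv, ⟨⟨h50, hs⟩, by omega, by omega⟩⟩)
      · by_cases hv : USPlayer.vp ∈ S
        · rw [if_neg hp, if_pos hv] at hd
          exact Or.inr (Or.inr (Or.inr ⟨hp, hv, ⟨⟨h67, hs⟩, by omega, by omega⟩⟩))
        · rw [if_neg hp, if_neg hv] at hd
          exact Or.inr (Or.inr (Or.inl ⟨hp, hv, ⟨⟨h67, hs⟩, by omega, by omega⟩⟩))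
    · rintro (⟨hp, hv, ⟨h51, hs⟩, hk', hr⟩ | ⟨hp, hv, ⟨h50, hs⟩, hk', hr⟩ |
        ⟨hp, hv, ⟨h67, hs⟩, hk', hr⟩ | ⟨hp, hv, ⟨h67, hs⟩, hk', hr⟩)
      · rw [if_pos hp, if_neg hv] at hd
        exact ⟨by omega, Or.inl ⟨hp, hv, hs, h51, by omega⟩⟩
      · rw [if_pos hp, if_pos hv] at hd
        exact ⟨by omega, Or.inr (Or.inl ⟨hp, hv, hs, h50, by omega⟩)⟩
      · rw [if_neg hp, if_neg hv] at hd
        exact ⟨by omega, Or.inr (Or.inr ⟨hp, hs, h67, by omega⟩)⟩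
      · rw [if_neg hp, if_pos hv] at hd
        exact ⟨by omega, Or.inr (Or.inr ⟨hp, hs, h67, by omega⟩)⟩
  rw [hfe, filter_or, filter_or, filter_or]
  have hA1 : ((univ.powersetCard 51).filter (fun A => s ∈ A)).card = Nat.choose 99 50 :=
    card_subsets_mem 99 50 s
  have hA2 : ((univ.powersetCard 50).filter (fun A => s ∈ A)).card = Nat.choose 99 49 :=
    card_subsets_mem 99 49 s
  have hA3 : ((univ.powersetCard 67).filter (fun A => s ∈ A)).card = Nat.choose 99 66 :=
    card_subsets_mem 99 66 s
  have hB1 : (if 270 ≤ k then (univ : Finset (Fin 435)).powersetCard (k-52) else ∅).card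
      = if 270 ≤ k then Nat.choose 435 (k-52) else 0 := by
    split_ifs
    · rw [card_powersetCard_univ]
    · exact card_empty
  have hB3 : (if 357 ≤ k then (univ : Finset (Fin 435)).powersetCard (k-67) else ∅).card
      = if 357 ≤ k then Nat.choose 435 (k-67) else 0 := by
    split_ifs
    · rw [card_powersetCard_univ]
    · exact card_empty
  have hB4 : (if 358 ≤ k then (univ : Finset (Fin 435)).powersetCard (k-68) else ∅).card
      = if 358 ≤ k then Nat.choose 435 (k-68) else 0 := by
    split_ifs
    · rw [card_powersetCard_univ]
    · exact card_empty
  have hd34 : Disjoint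
      (univ.filter (fun S : Finset USPlayer =>
        (USPlayer.pres ∈ S ↔ false = true) ∧ (USPlayer.vp ∈ S ↔ false = true) ∧
          senSet S ∈ (univ.powersetCard 67).filter (fun A => s ∈ A) ∧
          repSet S ∈ (if 357 ≤ k then univ.powersetCard (k-67) else ∅)))
      (univ.filter (fun S : Finset USPlayer =>
        (USPlayer.pres ∈ S ↔ false = true) ∧ (USPlayer.vp ∈ S ↔ true = true) ∧
          senSet S ∈ (univ.powersetCard 67).filter (fun A => s ∈ A) ∧
          repSet S ∈ (if 358 ≤ k then univ.powersetCard (k-68) else ∅))) := by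
    rw [disjoint_left]
    intro S h1 h2
    simp only [mem_filter] at h1 h2
    have := h1.2.2.1
    have := h2.2.2.1
    simp_all
  have hd234 : Disjoint
      (univ.filter (fun S : Finset USPlayer =>
        (USPlayer.pres ∈ S ↔ true = true) ∧ (USPlayer.vp ∈ S ↔ true = true) ∧
          senSet S ∈ (univ.powersetCard 50).filter (fun A => s ∈ A) ∧
          repSet S ∈ (if 270 ≤ k then univ.powersetCard (k-52) else ∅)))
      ((univ.filter (fun S : Finset USPlayer =>
        (USPlayer.pres ∈ S ↔ false = true) ∧ (USPlayer.vp ∈ S ↔ false = true) ∧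
          senSet S ∈ (univ.powersetCard 67).filter (fun A => s ∈ A) ∧
          repSet S ∈ (if 357 ≤ k then univ.powersetCard (k-67) else ∅))) ∪
       (univ.filter (fun S : Finset USPlayer =>
        (USPlayer.pres ∈ S ↔ false = true) ∧ (USPlayer.vp ∈ S ↔ true = true) ∧
          senSet S ∈ (univ.powersetCard 67).filter (fun A => s ∈ A) ∧
          repSet S ∈ (if 358 ≤ k then univ.powersetCard (k-68) else ∅)))) := by
    rw [disjoint_left]
    intro S h1 h2
    simp only [mem_union, mem_filter] at h1 h2
    have := h1.2.1
    rcases h2 with h2 | h2 <;> have := h2.2.1 <;> simp_all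
  have hd1234 : Disjoint
      (univ.filter (fun S : Finset USPlayer =>
        (USPlayer.pres ∈ S ↔ true = true) ∧ (USPlayer.vp ∈ S ↔ false = true) ∧
          senSet S ∈ (univ.powersetCard 51).filter (fun A => s ∈ A) ∧
          repSet S ∈ (if 270 ≤ k then univ.powersetCard (k-52) else ∅)))
      ((univ.filter (fun S : Finset USPlayer =>
        (USPlayer.pres ∈ S ↔ true = true) ∧ (USPlayer.vp ∈ S ↔ true = true) ∧
          senSet S ∈ (univ.powersetCard 50).filter (fun A => s ∈ A) ∧
          repSet S ∈ (if 270 ≤ k then univ.powersetCard (k-52) else ∅))) ∪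
       ((univ.filter (fun S : Finset USPlayer =>
        (USPlayer.pres ∈ S ↔ false = true) ∧ (USPlayer.vp ∈ S ↔ false = true) ∧
          senSet S ∈ (univ.powersetCard 67).filter (fun A => s ∈ A) ∧
          repSet S ∈ (if 357 ≤ k then univ.powersetCard (k-67) else ∅))) ∪
        (univ.filter (fun S : Finset USPlayer =>
        (USPlayer.pres ∈ S ↔ false = true) ∧ (USPlayer.vp ∈ S ↔ true = true) ∧
          senSet S ∈ (univ.powersetCard 67).filter (fun A => s ∈ A) ∧
          repSet S ∈ (if 358 ≤ k then univ.powersetCard (k-68) else ∅))))) := by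
    rw [disjoint_left]
    intro S h1 h2
    simp only [mem_union, mem_filter] at h1 h2
    have h1a := h1.2.1
    have h1b := h1.2.2.1
    rcases h2 with h2 | h2 | h2 <;> first
      | (have := h2.2.1; simp_all)
      | (have := h2.2.2.1; simp_all)
  rw [card_union_of_disjoint hd1234, card_union_of_disjoint hd234, card_union_of_disjoint hd34,
    count_profile, count_profile, count_profile, count_profile,
    hA1, hA2, hA3, hB1, hB3, hB4]
  split_ifs <;> ring

lemma crit_rep_eq (r : Fin 435) (k : ℕ) : usCrit (USPlayer.rep r) k =
    (if 270 ≤ k then (Nat.choose 100 (k-219) + Nat.choose 100 (k-220)) * Nat.choose 434 217 else 0)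
      + (if 357 ≤ k then Nat.choose 100 (k-290) * Nat.choose 434 289 else 0)
      + (if 358 ≤ k then Nat.choose 100 (k-291) * Nat.choose 434 289 else 0) := by
  rw [usCrit_eq_card]
  have hfe : (univ.filter (fun S : Finset USPlayer =>
      S.card = k ∧ USPlayer.rep r ∈ S ∧ usWinning S ∧ ¬ usWinning (S.erase (USPlayer.rep r))))
      = (univ.filter (fun S : Finset USPlayer =>
        ((USPlayer.pres ∈ S ↔ true = true) ∧ (USPlayer.vp ∈ S ↔ false = true) ∧
          senSet S ∈ (if 270 ≤ k then univ.powersetCard (k-219) else ∅) ∧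
          repSet S ∈ (univ.powersetCard 218).filter (fun B => r ∈ B)) ∨
        ((USPlayer.pres ∈ S ↔ true = true) ∧ (USPlayer.vp ∈ S ↔ true = true) ∧
          senSet S ∈ (if 270 ≤ k then univ.powersetCard (k-220) else ∅) ∧
          repSet S ∈ (univ.powersetCard 218).filter (fun B => r ∈ B)) ∨
        ((USPlayer.pres ∈ S ↔ false = true) ∧ (USPlayer.vp ∈ S ↔ false = true) ∧
          senSet S ∈ (if 357 ≤ k then univ.powersetCard (k-290) else ∅) ∧
          repSet S ∈ (univ.powersetCard 290).filter (fun B => r ∈ B)) ∨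
        ((USPlayer.pres ∈ S ↔ false = true) ∧ (USPlayer.vp ∈ S ↔ true = true) ∧
          senSet S ∈ (if 358 ≤ k then univ.powersetCard (k-291) else ∅) ∧
          repSet S ∈ (univ.powersetCard 290).filter (fun B => r ∈ B)))) := by
    apply filter_congr
    intro S _
    rw [crit_rep_iff]
    have hd := card_decomp S
    rw [numSen_eq, numRep_eq]
    simp only [mem_filter, mem_powersetCard_univ, mem_repSet, mem_ite_empty, iff_true,
      Bool.false_eq_true, iff_false]
    constructor
    · rintro ⟨hcard, hD⟩
      rcases hD with ⟨hp, hs, h218, hsen⟩ | ⟨hp, hs, h290, h67⟩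
      · by_cases hv : USPlayer.vp ∈ S
        · rw [if_pos hp, if_pos hv] at hd
          have h50 : 50 ≤ (senSet S).card := by rcases hsen with h | ⟨_, h⟩ <;> omega
          exact Or.inr (Or.inl ⟨hp, hv, ⟨by omega, by omega⟩, h218, hs⟩)
        · rw [if_pos hp, if_neg hv] at hd
          rcases hsen with h51 | ⟨hv', _⟩
          · exact Or.inl ⟨hp, hv, ⟨by omega, by omega⟩, h218, hs⟩
          · exact absurd hv' hv
      · by_cases hv : USPlayer.vp ∈ S
        · rw [if_neg hp, if_pos hv] at hd
          exact Or.inr (Or.inr (Or.inr ⟨hp, hv, ⟨by omega, by omega⟩, h290, hs⟩))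
        · rw [if_neg hp, if_neg hv] at hd
          exact Or.inr (Or.inr (Or.inl ⟨hp, hv, ⟨by omega, by omega⟩, h290, hs⟩))
    · rintro (⟨hp, hv, ⟨hk', hsC⟩, h218, hs⟩ | ⟨hp, hv, ⟨hk', hsC⟩, h218, hs⟩ |
        ⟨hp, hv, ⟨hk', hsC⟩, h290, hs⟩ | ⟨hp, hv, ⟨hk', hsC⟩, h290, hs⟩)
      · rw [if_pos hp, if_neg hv] at hd
        exact ⟨by omega, Or.inl ⟨hp, hs, h218, Or.inl (by omega)⟩⟩
      · rw [if_pos hp, if_pos hv] at hd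
        exact ⟨by omega, Or.inl ⟨hp, hs, h218, Or.inr ⟨hv, by omega⟩⟩⟩
      · rw [if_neg hp, if_neg hv] at hd
        exact ⟨by omega, Or.inr ⟨hp, hs, h290, by omega⟩⟩
      · rw [if_neg hp, if_pos hv] at hd
        exact ⟨by omega, Or.inr ⟨hp, hs, h290, by omega⟩⟩
  rw [hfe, filter_or, filter_or, filter_or]
  have hB1 : ((univ.powersetCard 218).filter (fun B => r ∈ B)).card = Nat.choose 434 217 :=
    card_subsets_mem 434 217 r
  have hB2 : ((univ.powersetCard 290).filter (fun B => r ∈ B)).card = Nat.choose 434 289 :=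
    card_subsets_mem 434 289 r
  have hA1 : (if 270 ≤ k then (univ : Finset (Fin 100)).powersetCard (k-219) else ∅).card
      = if 270 ≤ k then Nat.choose 100 (k-219) else 0 := by
    split_ifs
    · rw [card_powersetCard_univ]
    · exact card_empty
  have hA2 : (if 270 ≤ k then (univ : Finset (Fin 100)).powersetCard (k-220) else ∅).card
      = if 270 ≤ k then Nat.choose 100 (k-220) else 0 := by
    split_ifs
    · rw [card_powersetCard_univ]
    · exact card_empty
  have hA3 : (if 357 ≤ k then (univ : Finset (Fin 100)).powersetCard (k-290) else ∅).card
      = if 357 ≤ k then Nat.choose 100 (k-290) else 0 := by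
    split_ifs
    · rw [card_powersetCard_univ]
    · exact card_empty
  have hA4 : (if 358 ≤ k then (univ : Finset (Fin 100)).powersetCard (k-291) else ∅).card
      = if 358 ≤ k then Nat.choose 100 (k-291) else 0 := by
    split_ifs
    · rw [card_powersetCard_univ]
    · exact card_empty
  have hd34 : Disjoint
      (univ.filter (fun S : Finset USPlayer =>
        (USPlayer.pres ∈ S ↔ false = true) ∧ (USPlayer.vp ∈ S ↔ false = true) ∧
          senSet S ∈ (if 357 ≤ k then univ.powersetCard (k-290) else ∅) ∧
          repSet S ∈ (univ.powersetCard 290).filter (fun B => r ∈ B)))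
      (univ.filter (fun S : Finset USPlayer =>
        (USPlayer.pres ∈ S ↔ false = true) ∧ (USPlayer.vp ∈ S ↔ true = true) ∧
          senSet S ∈ (if 358 ≤ k then univ.powersetCard (k-291) else ∅) ∧
          repSet S ∈ (univ.powersetCard 290).filter (fun B => r ∈ B))) := by
    rw [disjoint_left]
    intro S h1 h2
    simp only [mem_filter] at h1 h2
    have := h1.2.2.1
    have := h2.2.2.1
    simp_all
  have hd234 : Disjoint
      (univ.filter (fun S : Finset USPlayer =>
        (USPlayer.pres ∈ S ↔ true = true) ∧ (USPlayer.vp ∈ S ↔ true = true) ∧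
          senSet S ∈ (if 270 ≤ k then univ.powersetCard (k-220) else ∅) ∧
          repSet S ∈ (univ.powersetCard 218).filter (fun B => r ∈ B)))
      ((univ.filter (fun S : Finset USPlayer =>
        (USPlayer.pres ∈ S ↔ false = true) ∧ (USPlayer.vp ∈ S ↔ false = true) ∧
          senSet S ∈ (if 357 ≤ k then univ.powersetCard (k-290) else ∅) ∧
          repSet S ∈ (univ.powersetCard 290).filter (fun B => r ∈ B))) ∪
       (univ.filter (fun S : Finset USPlayer =>
        (USPlayer.pres ∈ S ↔ false = true) ∧ (USPlayer.vp ∈ S ↔ true = true) ∧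
          senSet S ∈ (if 358 ≤ k then univ.powersetCard (k-291) else ∅) ∧
          repSet S ∈ (univ.powersetCard 290).filter (fun B => r ∈ B)))) := by
    rw [disjoint_left]
    intro S h1 h2
    simp only [mem_union, mem_filter] at h1 h2
    have := h1.2.1
    rcases h2 with h2 | h2 <;> have := h2.2.1 <;> simp_all
  have hd1234 : Disjoint
      (univ.filter (fun S : Finset USPlayer =>
        (USPlayer.pres ∈ S ↔ true = true) ∧ (USPlayer.vp ∈ S ↔ false = true) ∧
          senSet S ∈ (if 270 ≤ k then univ.powersetCard (k-219) else ∅) ∧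
          repSet S ∈ (univ.powersetCard 218).filter (fun B => r ∈ B)))
      ((univ.filter (fun S : Finset USPlayer =>
        (USPlayer.pres ∈ S ↔ true = true) ∧ (USPlayer.vp ∈ S ↔ true = true) ∧
          senSet S ∈ (if 270 ≤ k then univ.powersetCard (k-220) else ∅) ∧
          repSet S ∈ (univ.powersetCard 218).filter (fun B => r ∈ B))) ∪
       ((univ.filter (fun S : Finset USPlayer =>
        (USPlayer.pres ∈ S ↔ false = true) ∧ (USPlayer.vp ∈ S ↔ false = true) ∧
          senSet S ∈ (if 357 ≤ k then univ.powersetCard (k-290) else ∅) ∧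
          repSet S ∈ (univ.powersetCard 290).filter (fun B => r ∈ B))) ∪
        (univ.filter (fun S : Finset USPlayer =>
        (USPlayer.pres ∈ S ↔ false = true) ∧ (USPlayer.vp ∈ S ↔ true = true) ∧
          senSet S ∈ (if 358 ≤ k then univ.powersetCard (k-291) else ∅) ∧
          repSet S ∈ (univ.powersetCard 290).filter (fun B => r ∈ B))))) := by
    rw [disjoint_left]
    intro S h1 h2
    simp only [mem_union, mem_filter] at h1 h2
    have h1a := h1.2.1
    have h1b := h1.2.2.1
    rcases h2 with h2 | h2 | h2 <;> first
      | (have := h2.2.1; simp_all)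
      | (have := h2.2.2.1; simp_all)
  rw [card_union_of_disjoint hd1234, card_union_of_disjoint hd234, card_union_of_disjoint hd34,
    count_profile, count_profile, count_profile, count_profile,
    hA1, hA2, hA3, hA4, hB1, hB2]
  split_ifs <;> ring

lemma choose_100_50_split : Nat.choose 100 50 = Nat.choose 99 50 + Nat.choose 99 49 := by
  have h := Nat.choose_succ_succ 99 49
  norm_num at h
  omega

lemma usCrit_vp_le_sen (s : Fin 100) (k : ℕ) : usCrit USPlayer.vp k ≤ usCrit (USPlayer.sen s) k := by
  rw [crit_vp_eq, crit_sen_eq]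
  split_ifs with h1 h2 h3 <;>
    first
      | exact Nat.zero_le _
      | (rw [choose_100_50_split, add_mul]
         exact le_trans (Nat.le_add_right _ _) (Nat.le_add_right _ _))

lemma usCrit_vp_lt_sen_357 (s : Fin 100) : usCrit USPlayer.vp 357 < usCrit (USPlayer.sen s) 357 := by
  rw [crit_vp_eq, crit_sen_eq]
  norm_num [choose_100_50_split, add_mul]
  exact ⟨Nat.choose_pos (by norm_num), Nat.choose_pos (by norm_num)⟩

lemma crit_pres_270_ge :
    (Nat.choose 100 51 + Nat.choose 100 50) * Nat.choose 435 218 ≤ usCrit USPlayer.pres 270 := by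
  rw [usCrit_eq_card]
  have hsub : (univ.filter (fun S : Finset USPlayer =>
        ((USPlayer.pres ∈ S ↔ true = true) ∧ (USPlayer.vp ∈ S ↔ false = true) ∧
          senSet S ∈ univ.powersetCard 51 ∧ repSet S ∈ univ.powersetCard 218) ∨
        ((USPlayer.pres ∈ S ↔ true = true) ∧ (USPlayer.vp ∈ S ↔ true = true) ∧
          senSet S ∈ univ.powersetCard 50 ∧ repSet S ∈ univ.powersetCard 218)))
      ⊆ (univ.filter (fun S : Finset USPlayer =>
        S.card = 270 ∧ USPlayer.pres ∈ S ∧ usWinning S ∧ ¬ usWinning (S.erase USPlayer.pres))) := by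
    intro S hS
    rw [mem_filter] at hS ⊢
    refine ⟨hS.1, ?_⟩
    have hd := card_decomp S
    rcases hS.2 with ⟨hp, hv, hsC, hrC⟩ | ⟨hp, hv, hsC, hrC⟩ <;>
      rw [mem_powersetCard_univ] at hsC hrC
    · have hp' : USPlayer.pres ∈ S := hp.2 rfl
      have hv' : USPlayer.vp ∉ S := fun h => by simpa using hv.1 h
      rw [if_pos hp', if_neg hv'] at hd
      have hcrit := crit_pres_of S hp' (by rw [numRep_eq]; omega)
        (Or.inl (by rw [numSen_eq]; omega)) (by rw [numSen_eq]; omega)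
      exact ⟨by omega, hcrit⟩
    · have hp' : USPlayer.pres ∈ S := hp.2 rfl
      have hv' : USPlayer.vp ∈ S := hv.2 rfl
      rw [if_pos hp', if_pos hv'] at hd
      have hcrit := crit_pres_of S hp' (by rw [numRep_eq]; omega)
        (Or.inr ⟨hv', by rw [numSen_eq]; omega⟩) (by rw [numSen_eq]; omega)
      exact ⟨by omega, hcrit⟩
  have hdisj : Disjoint
      (univ.filter (fun S : Finset USPlayer =>
        (USPlayer.pres ∈ S ↔ true = true) ∧ (USPlayer.vp ∈ S ↔ false = true) ∧
          senSet S ∈ univ.powersetCard 51 ∧ repSet S ∈ univ.powersetCard 218))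
      (univ.filter (fun S : Finset USPlayer =>
        (USPlayer.pres ∈ S ↔ true = true) ∧ (USPlayer.vp ∈ S ↔ true = true) ∧
          senSet S ∈ univ.powersetCard 50 ∧ repSet S ∈ univ.powersetCard 218)) := by
    rw [disjoint_left]
    intro S h1 h2
    rw [mem_filter] at h1 h2
    have := h1.2.2.1
    have := h2.2.2.1
    simp_all
  have hcard := card_le_card hsub
  rw [filter_or, card_union_of_disjoint hdisj, count_profile, count_profile,
    card_powersetCard_univ, card_powersetCard_univ, card_powersetCard_univ] at hcard
  calc (Nat.choose 100 51 + Nat.choose 100 50) * Nat.choose 435 218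
      = Nat.choose 100 51 * Nat.choose 435 218 + Nat.choose 100 50 * Nat.choose 435 218 := by
        ring
    _ ≤ _ := hcard

lemma usCrit_sen_lt_pres_270 (s : Fin 100) :
    usCrit (USPlayer.sen s) 270 < usCrit USPlayer.pres 270 := by
  have h1 : usCrit (USPlayer.sen s) 270 = Nat.choose 100 50 * Nat.choose 435 218 := by
    rw [crit_sen_eq]
    norm_num [choose_100_50_split, add_mul]
  rw [h1]
  calc Nat.choose 100 50 * Nat.choose 435 218
      < (Nat.choose 100 51 + Nat.choose 100 50) * Nat.choose 435 218 := by
        have c1 : 0 < Nat.choose 100 51 := Nat.choose_pos (by norm_num)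
        have c2 : 0 < Nat.choose 435 218 := Nat.choose_pos (by norm_num)
        have c3 : 0 < Nat.choose 100 50 := Nat.choose_pos (by norm_num)
        nlinarith
    _ ≤ usCrit USPlayer.pres 270 := crit_pres_270_ge

set_option maxRecDepth 1000000 in
lemma banzhaf_rep_lt_vp (r : Fin 435) (s' : Fin 100) :
    ∑ k ∈ Finset.Icc 1 537, usCrit (USPlayer.rep r) k
      < ∑ k ∈ Finset.Icc 1 537, usCrit USPlayer.vp k := by
  have h1 : ∑ k ∈ Finset.Icc 1 537, usCrit (USPlayer.rep r) k
      = ∑ k ∈ Finset.Icc 1 537,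
        ((if 270 ≤ k then (Nat.descFactorial 100 (k-219) / Nat.factorial (k-219)
            + Nat.descFactorial 100 (k-220) / Nat.factorial (k-220))
            * (Nat.descFactorial 434 217 / Nat.factorial 217) else 0)
          + (if 357 ≤ k then (Nat.descFactorial 100 (k-290) / Nat.factorial (k-290))
            * (Nat.descFactorial 434 289 / Nat.factorial 289) else 0)
          + (if 358 ≤ k then (Nat.descFactorial 100 (k-291) / Nat.factorial (k-291))
            * (Nat.descFactorial 434 289 / Nat.factorial 289) else 0)) := by
    refine Finset.sum_congr rfl (fun k _ => ?_)
    rw [crit_rep_eq]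
    simp only [Nat.choose_eq_descFactorial_div_factorial]
  have h2 : ∑ k ∈ Finset.Icc 1 537, usCrit USPlayer.vp k
      = ∑ k ∈ Finset.Icc 1 537,
        (if 270 ≤ k then (Nat.descFactorial 100 50 / Nat.factorial 50)
          * (Nat.descFactorial 435 (k-52) / Nat.factorial (k-52)) else 0) := by
    refine Finset.sum_congr rfl (fun k _ => ?_)
    rw [crit_vp_eq]
    simp only [Nat.choose_eq_descFactorial_div_factorial]
  rw [h1, h2]
  decide

set_option maxRecDepth 1000000 in
lemma shapley_rep_lt_vp (r : Fin 435) :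
    ∑ k ∈ Finset.Icc 1 537, (k-1).factorial * (537-k).factorial * usCrit (USPlayer.rep r) k
      < ∑ k ∈ Finset.Icc 1 537, (k-1).factorial * (537-k).factorial * usCrit USPlayer.vp k := by
  have h1 : ∑ k ∈ Finset.Icc 1 537, (k-1).factorial * (537-k).factorial * usCrit (USPlayer.rep r) k
      = ∑ k ∈ Finset.Icc 1 537, (k-1).factorial * (537-k).factorial *
        ((if 270 ≤ k then (Nat.descFactorial 100 (k-219) / Nat.factorial (k-219)
            + Nat.descFactorial 100 (k-220) / Nat.factorial (k-220))
            * (Nat.descFactorial 434 217 / Nat.factorial 217) else 0)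
          + (if 357 ≤ k then (Nat.descFactorial 100 (k-290) / Nat.factorial (k-290))
            * (Nat.descFactorial 434 289 / Nat.factorial 289) else 0)
          + (if 358 ≤ k then (Nat.descFactorial 100 (k-291) / Nat.factorial (k-291))
            * (Nat.descFactorial 434 289 / Nat.factorial 289) else 0)) := by
    refine Finset.sum_congr rfl (fun k _ => ?_)
    rw [crit_rep_eq]
    simp only [Nat.choose_eq_descFactorial_div_factorial]
  have h2 : ∑ k ∈ Finset.Icc 1 537, (k-1).factorial * (537-k).factorial * usCrit USPlayer.vp k
      = ∑ k ∈ Finset.Icc 1 537, (k-1).factorial * (537-k).factorial *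
        (if 270 ≤ k then (Nat.descFactorial 100 50 / Nat.factorial 50)
          * (Nat.descFactorial 435 (k-52) / Nat.factorial (k-52)) else 0) := by
    refine Finset.sum_congr rfl (fun k _ => ?_)
    rw [crit_vp_eq]
    simp only [Nat.choose_eq_descFactorial_div_factorial]
  rw [h1, h2]
  decide

/-- Theorem 3 (b) of the paper: under the Banzhaf index (`lam k = 1/2^536`) or the
Shapley–Shubik index (`lam k = 1/(537 * C(536, k-1))`), the ranking is
president > senator > vice president > representative. -/
theorem us_banzhaf_shapley_ranking (lam : ℕ → ℝ)
    (hlam : (∀ k, lam k = 1 / 2 ^ 536) ∨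
            (∀ k, lam k = 1 / (537 * (Nat.choose 536 (k - 1) : ℝ))))
    (s : Fin 100) (r : Fin 435) :
    usPower lam USPlayer.pres > usPower lam (USPlayer.sen s) ∧
    usPower lam (USPlayer.sen s) > usPower lam USPlayer.vp ∧
    usPower lam USPlayer.vp > usPower lam (USPlayer.rep r) := by
  have hpos : ∀ k ∈ Finset.Icc 1 537, 0 < lam k := by
    intro k hk
    rw [Finset.mem_Icc] at hk
    rcases hlam with hB | hS
    · rw [hB k]; positivity
    · rw [hS k]
      have h1 : 0 < Nat.choose 536 (k-1) := Nat.choose_pos (by omega)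
      have h2 : (0:ℝ) < (Nat.choose 536 (k-1) : ℝ) := by exact_mod_cast h1
      positivity
  refine ⟨?_, ?_, ?_⟩
  · apply Finset.sum_lt_sum
    · intro k hk
      exact mul_le_mul_of_nonneg_left (by exact_mod_cast usCrit_sen_le_pres s k)
        (le_of_lt (hpos k hk))
    · exact ⟨270, by simp, mul_lt_mul_of_pos_left
        (by exact_mod_cast usCrit_sen_lt_pres_270 s) (hpos 270 (by simp))⟩
  · apply Finset.sum_lt_sum
    · intro k hk
      exact mul_le_mul_of_nonneg_left (by exact_mod_cast usCrit_vp_le_sen s k)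
        (le_of_lt (hpos k hk))
    · exact ⟨357, by simp, mul_lt_mul_of_pos_left
        (by exact_mod_cast usCrit_vp_lt_sen_357 s) (hpos 357 (by simp))⟩
  · rcases hlam with hB | hS
    · have e : ∀ i : USPlayer, usPower lam i
          = (1/2^536 : ℝ) * ∑ k ∈ Finset.Icc 1 537, (usCrit i k : ℝ) := by
        intro i
        rw [usPower, Finset.mul_sum]
        exact Finset.sum_congr rfl (fun k _ => by rw [hB k])
      rw [e, e]
      apply mul_lt_mul_of_pos_left _ (by positivity)
      rw [← Nat.cast_sum, ← Nat.cast_sum]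
      exact_mod_cast banzhaf_rep_lt_vp r s
    · have e : ∀ i : USPlayer, usPower lam i
          = ((∑ k ∈ Finset.Icc 1 537, (k-1).factorial * (537-k).factorial * usCrit i k : ℕ) : ℝ)
            / (Nat.factorial 537 : ℝ) := by
        intro i
        rw [usPower, Nat.cast_sum, Finset.sum_div]
        refine Finset.sum_congr rfl (fun k hk => ?_)
        rw [Finset.mem_Icc] at hk
        have hfac : (Nat.choose 536 (k-1)) * ((k-1).factorial * (537-k).factorial) * 537
            = Nat.factorial 537 := by
          have e1 := Nat.choose_mul_factorial_mul_factorial (show k-1 ≤ 536 by omega)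
          have e2 : 536 - (k-1) = 537 - k := by omega
          rw [e2] at e1
          have e3 : Nat.factorial 537 = 537 * Nat.factorial 536 := by
            rw [show (537:ℕ) = 536 + 1 from rfl, Nat.factorial_succ]
          rw [e3, ← e1]; ring
        rw [hS k]
        have hC : (0:ℝ) < (Nat.choose 536 (k-1) : ℝ) := by
          exact_mod_cast Nat.choose_pos (show k-1 ≤ 536 by omega)
        have h537 : ((Nat.factorial 537 : ℕ) : ℝ)
            = (Nat.choose 536 (k-1) : ℝ) * (((k-1).factorial : ℝ) * ((537-k).factorial : ℝ)) * 537 := by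
          exact_mod_cast congrArg (Nat.cast (R := ℝ)) hfac.symm
        have hf1 : (0:ℝ) < ((k-1).factorial : ℝ) := by exact_mod_cast Nat.factorial_pos _
        have hf2 : (0:ℝ) < ((537-k).factorial : ℝ) := by exact_mod_cast Nat.factorial_pos _
        push_cast
        rw [h537]
        field_simp
      rw [e, e]
      rw [gt_iff_lt, div_lt_div_iff_of_pos_right (by exact_mod_cast Nat.factorial_pos 537)]
      exact_mod_cast shapley_rep_lt_vp r
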